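/- For every α ∈ ℝ, every h > 0 and every integer j ≥ 0, one has ∫_0^h e^{α (h − s)} s^j ds = j! · h^{j+1} · φ_{j+1}(α h). -/

import Mathlib

/-- `φ_j(z) = Σ_{n=0}^∞ z^n / (n+j)!`. -/
noncomputable def phi (j : ℕ) (z : ℝ) : ℝ := ∑' n : ℕ, z ^ n / (Nat.factorial (n + j))

lemma summable_phi (j : ℕ) (z : ℝ) :
    Summable (fun n : ℕ => z ^ n / (Nat.factorial (n + j))) := by
  apply Summable.of_norm_bounded (Real.summable_pow_div_factorial |z|)
  intro n
  rw [norm_div, norm_pow, Real.norm_eq_abs, Real.norm_eq_abs,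
    abs_of_nonneg (show (0:ℝ) ≤ (Nat.factorial (n+j) : ℝ) by positivity)]
  gcongr
  · exact Nat.le_add_right n j

lemma phi_succ (j : ℕ) (z : ℝ) :
    z * phi (j+1) z = phi j z - 1 / (Nat.factorial j) := by
  unfold phi
  rw [Summable.tsum_eq_zero_add (summable_phi j z)]
  have : ∀ n : ℕ, z ^ (n+1) / (Nat.factorial (n + 1 + j)) =
      z * (z ^ n / (Nat.factorial (n + (j+1)))) := by
    intro n
    have : n + 1 + j = n + (j + 1) := by omega
    rw [this, pow_succ]; ring
  simp only [this, tsum_mul_left, pow_zero, zero_add]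
  ring

lemma phi_zero_eq (z : ℝ) : phi 0 z = Real.exp z := by
  rw [Real.exp_eq_exp_ℝ, NormedSpace.exp_eq_tsum_div]
  unfold phi
  simp

theorem integral_exp_mul_pow (α h : ℝ) (hh : 0 < h) (j : ℕ) :
    ∫ s in (0 : ℝ)..h, Real.exp (α * (h - s)) * s ^ j =
      (Nat.factorial j : ℝ) * h ^ (j + 1) * phi (j + 1) (α * h) := by
  rcases eq_or_ne α 0 with rfl | hα
  · simp only [zero_mul, Real.exp_zero, one_mul]
    rw [integral_pow]
    have hphi : phi (j + 1) 0 = 1 / ((Nat.factorial (j + 1) : ℝ)) := by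
      unfold phi
      rw [tsum_eq_single 0 (by intro n hn; simp [zero_pow hn])]
      simp
    rw [hphi, Nat.factorial_succ]
    have : (Nat.factorial j : ℝ) ≠ 0 := by positivity
    push_cast
    field_simp
    ring
  · induction j with
    | zero =>
      simp only [pow_zero, mul_one, Nat.factorial_zero, Nat.cast_one, one_mul, pow_one]
      have h1 : (∫ s in (0:ℝ)..h, Real.exp (α * (h - s))) =
          ∫ s in (0:ℝ)..h, Real.exp (α * s) := by
        have := intervalIntegral.integral_comp_sub_left (a := (0:ℝ)) (b := h)
          (fun u => Real.exp (α * u)) h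
        simpa using this
      have h2 : (∫ s in (0:ℝ)..h, Real.exp (α * s)) = α⁻¹ * (Real.exp (α * h) - 1) := by
        rw [intervalIntegral.integral_comp_mul_left (fun u => Real.exp u) hα]
        norm_num [integral_exp, smul_eq_mul]
      have key := phi_succ 0 (α * h)
      rw [phi_zero_eq] at key
      norm_num at key
      rw [h1, h2, ← key]
      field_simp
      ring
    | succ j ih =>
      have hv : ∀ x ∈ Set.uIcc (0:ℝ) h,
          HasDerivAt (fun s => -Real.exp (α * (h - s)) / α) (Real.exp (α * (h - x))) x := by
        intro x _
        have d1 : HasDerivAt (fun s : ℝ => α * (h - s)) (-α) x := by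
          simpa using ((hasDerivAt_id x).const_sub h).const_mul α
        simpa [Pi.neg_def, mul_neg, neg_div, neg_neg, mul_div_assoc, div_self hα]
          using (d1.exp.div_const α).neg
      have hu : ∀ x ∈ Set.uIcc (0:ℝ) h,
          HasDerivAt (fun s : ℝ => s ^ (j + 1)) (((j:ℝ) + 1) * x ^ j) x := by
        intro x _
        simpa using hasDerivAt_pow (j + 1) x
      have hu' : IntervalIntegrable (fun x : ℝ => ((j:ℝ) + 1) * x ^ j) MeasureTheory.volume 0 h :=
        (Continuous.intervalIntegrable (by continuity) 0 h)
      have hv' : IntervalIntegrable (fun x : ℝ => Real.exp (α * (h - x))) MeasureTheory.volume 0 h :=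
        (Continuous.intervalIntegrable (by continuity) 0 h)
      have ibp := intervalIntegral.integral_mul_deriv_eq_deriv_mul hu hv hu' hv'
      have hcomm : (∫ s in (0:ℝ)..h, Real.exp (α * (h - s)) * s ^ (j + 1)) =
          ∫ s in (0:ℝ)..h, s ^ (j + 1) * Real.exp (α * (h - s)) := by
        simp [mul_comm]
      have hrest : (∫ x in (0:ℝ)..h, ((j:ℝ) + 1) * x ^ j * (-Real.exp (α * (h - x)) / α)) =
          (((j:ℝ) + 1) * (-1 / α)) * ∫ x in (0:ℝ)..h, Real.exp (α * (h - x)) * x ^ j := by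
        rw [← intervalIntegral.integral_const_mul]
        congr 1 with x
        field_simp
      rw [hcomm, ibp, hrest, ih]
      have key := phi_succ (j + 1) (α * h)
      have hh' : h ≠ 0 := ne_of_gt hh
      have hf1 : (Nat.factorial (j + 1) : ℝ) = ((j:ℝ) + 1) * Nat.factorial j := by
        rw [Nat.factorial_succ]; push_cast; ring
      have hf2 : (Nat.factorial (j + 1 + 1) : ℝ) = ((j:ℝ) + 2) * Nat.factorial (j + 1) := by
        rw [Nat.factorial_succ (j+1)]; push_cast; ring
      have hfj : (Nat.factorial (j + 1) : ℝ) ≠ 0 := by positivity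
      rw [hf1] at key ⊢
      simp only [sub_self, mul_zero, Real.exp_zero, sub_zero, zero_pow (Nat.succ_ne_zero j),
        zero_mul]
      have hj1 : ((j:ℝ) + 1) ≠ 0 := by positivity
      have hj2 : (Nat.factorial j : ℝ) ≠ 0 := by positivity
      have hq : phi (j + 1 + 1) (α * h) =
          (phi (j + 1) (α * h) - 1 / (((j:ℝ) + 1) * Nat.factorial j)) / (α * h) := by
        rw [eq_div_iff (mul_ne_zero hα hh')]
        linear_combination key
      rw [hq]
      field_simp
      ring
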